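/- Let g : [a,b] → ℝ be continuously differentiable, m = (a+b)/2, and let 1 < p < ∞ with conjugate exponent q (1/p + 1/q = 1). Then |∫_a^b g(x) dx − (g(a)+g(b))(b−a)/2| ≤ (1/2)(q+1)^{−1/q} ‖g'‖_p (b−a)^{1+1/q}, where ‖g'‖_p = (∫_a^b |g'(x)|^p dx)^{1/p}. -/

import Mathlib

open MeasureTheory Set

/-- One-variable trapezoidal rule L^p error bound, 1 < p < ∞. -/
theorem stmt_17 (a b : ℝ) (hab : a < b) (p q : ℝ) (hp : 1 < p) (hpq : 1 / p + 1 / q = 1)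
    (g g' : ℝ → ℝ)
    (hg : ∀ x ∈ Icc a b, HasDerivAt g (g' x) x)
    (hg' : ContinuousOn g' (Icc a b)) :
    |(∫ x in a..b, g x) - (g a + g b) * (b - a) / 2|
      ≤ (1 / 2) * (q + 1) ^ (-(1 / q)) * (∫ x in a..b, |g' x| ^ p) ^ (1 / p)
          * (b - a) ^ (1 + 1 / q) := by
  have hab' : a ≤ b := hab.le
  set m : ℝ := (a + b) / 2 with hm
  have hcq : Real.HolderConjugate p q := Real.holderConjugate_iff.mpr ⟨hp, by simpa [one_div] using hpq⟩
  have hq1 : 1 < q := hcq.symm.lt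
  have hq0 : 0 < q := hcq.symm.pos
  have huIcc : Set.uIcc a b = Set.Icc a b := Set.uIcc_of_le hab'
  have hg'i : IntervalIntegrable g' volume a b :=
    (huIcc ▸ hg' : ContinuousOn g' (Set.uIcc a b)).intervalIntegrable
  -- integration by parts
  have hparts := intervalIntegral.integral_mul_deriv_eq_deriv_mul
    (u := g) (v := fun x => x - m) (u' := g') (v' := fun _ => (1 : ℝ))
    (fun x hx => hg x (huIcc ▸ hx))
    (fun x _ => (hasDerivAt_id x).sub_const m)
    hg'i intervalIntegrable_const
  have key : (∫ x in a..b, g x) - (g a + g b) * (b - a) / 2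
      = -∫ x in a..b, g' x * (x - m) := by
    have h1 : (∫ x in a..b, g x) = ∫ x in a..b, g x * 1 := by simp
    rw [h1, hparts, hm]; ring
  rw [key, abs_neg]
  -- pass to set integral over Ioc
  set μ := volume.restrict (Set.Ioc a b) with hμ
  haveI : IsFiniteMeasure μ := by
    constructor
    rw [hμ, Measure.restrict_apply_univ, Real.volume_Ioc]
    exact ENNReal.ofReal_lt_top
  have hIoc : (∫ x in a..b, g' x * (x - m)) = ∫ x, g' x * (x - m) ∂μ :=
    intervalIntegral.integral_of_le hab'
  -- Memℒp facts
  obtain ⟨C, hC⟩ := isCompact_Icc.exists_bound_of_continuousOn hg'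
  have hmg' : MemLp g' (ENNReal.ofReal p) μ :=
    MemLp.of_bound ((hg'.mono Set.Ioc_subset_Icc_self).aestronglyMeasurable measurableSet_Ioc) C
      ((ae_restrict_iff' measurableSet_Ioc).2 (Filter.Eventually.of_forall fun x hx =>
        hC x (Set.Ioc_subset_Icc_self hx)))
  obtain ⟨D, hD⟩ := isCompact_Icc.exists_bound_of_continuousOn
    (s := Set.Icc a b) ((continuous_id.sub continuous_const).continuousOn (s := Set.Icc a b)
      : ContinuousOn (fun x : ℝ => x - m) (Set.Icc a b))
  have hmv : MemLp (fun x : ℝ => x - m) (ENNReal.ofReal q) μ :=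
    MemLp.of_bound ((continuous_id.sub continuous_const).aestronglyMeasurable) D
      ((ae_restrict_iff' measurableSet_Ioc).2 (Filter.Eventually.of_forall fun x hx =>
        hD x (Set.Ioc_subset_Icc_self hx)))
  -- Hölder
  have holder := MeasureTheory.integral_mul_norm_le_Lp_mul_Lq (μ := μ) hcq hmg' hmv
  have habs : |∫ x, g' x * (x - m) ∂μ| ≤ ∫ x, ‖g' x‖ * ‖x - m‖ ∂μ := by
    have := MeasureTheory.norm_integral_le_integral_norm (μ := μ) (f := fun x => g' x * (x - m))
    rw [Real.norm_eq_abs] at this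
    refine le_trans this (le_of_eq (integral_congr_ae ?_))
    exact Filter.Eventually.of_forall fun x => by
      simp [Real.norm_eq_abs, abs_mul]
  -- identify the p-integral
  have hpint : (∫ x, ‖g' x‖ ^ p ∂μ) = ∫ x in a..b, |g' x| ^ p := by
    rw [intervalIntegral.integral_of_le hab']
    exact integral_congr_ae (Filter.Eventually.of_forall fun x => by
      simp [Real.norm_eq_abs])
  -- compute the q-integral
  have hmab : a ≤ m := by rw [hm]; linarith
  have hmb : m ≤ b := by rw [hm]; linarith
  have hcont : Continuous fun x : ℝ => |x - m| ^ q := by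
    apply Continuous.rpow_const (continuous_abs.comp (continuous_id.sub continuous_const))
    intro x; exact Or.inr hq0.le
  have hq1ne : q + 1 ≠ 0 := by positivity
  have hJ1 : (∫ x in a..m, |x - m| ^ q) = ((b - a) / 2) ^ (q + 1) / (q + 1) := by
    have e1 : (∫ x in a..m, |x - m| ^ q) = ∫ x in a..m, (m - x) ^ q := by
      refine intervalIntegral.integral_congr fun x hx => ?_
      rw [Set.uIcc_of_le hmab] at hx
      rw [abs_sub_comm, abs_of_nonneg (by linarith [hx.2])]
    rw [e1, intervalIntegral.integral_comp_sub_left (fun t => t ^ q) m, sub_self,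
      integral_rpow (Or.inl (by linarith))]
    rw [Real.zero_rpow hq1ne]
    have : m - a = (b - a) / 2 := by rw [hm]; ring
    rw [this]; ring
  have hJ2 : (∫ x in m..b, |x - m| ^ q) = ((b - a) / 2) ^ (q + 1) / (q + 1) := by
    have e1 : (∫ x in m..b, |x - m| ^ q) = ∫ x in m..b, (x - m) ^ q := by
      refine intervalIntegral.integral_congr fun x hx => ?_
      rw [Set.uIcc_of_le hmb] at hx
      rw [abs_of_nonneg (by linarith [hx.1])]
    rw [e1, intervalIntegral.integral_comp_sub_right (fun t => t ^ q) m, sub_self,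
      integral_rpow (Or.inl (by linarith))]
    rw [Real.zero_rpow hq1ne]
    have : b - m = (b - a) / 2 := by rw [hm]; ring
    rw [this]; ring
  have hJ : (∫ x, ‖x - m‖ ^ q ∂μ) = 2 * ((b - a) / 2) ^ (q + 1) / (q + 1) := by
    have : (∫ x, ‖x - m‖ ^ q ∂μ) = ∫ x in a..b, |x - m| ^ q := by
      rw [intervalIntegral.integral_of_le hab']
      exact integral_congr_ae (Filter.Eventually.of_forall fun x => by
        simp [Real.norm_eq_abs])
    rw [this, ← intervalIntegral.integral_add_adjacent_intervals
      (hcont.intervalIntegrable a m) (hcont.intervalIntegrable m b), hJ1, hJ2]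
    ring
  -- the value of the q-norm factor
  have hqnorm : (2 * ((b - a) / 2) ^ (q + 1) / (q + 1)) ^ (1 / q)
      = (1 / 2) * (q + 1) ^ (-(1 / q)) * (b - a) ^ (1 + 1 / q) := by
    have h2 : (0:ℝ) < 2 := by norm_num
    have hba : (0:ℝ) < b - a := by linarith
    have hc2 : (0:ℝ) < (b - a) / 2 := by positivity
    have hq1p : (0:ℝ) < q + 1 := by linarith
    have hqq : (q + 1) * (1 / q) = 1 + 1 / q := by field_simp
    have hexp : 1 / q - (1 + 1 / q) = -1 := by ring
    calc (2 * ((b - a) / 2) ^ (q + 1) / (q + 1)) ^ (1 / q)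
        = (2 : ℝ) ^ (1 / q) * (((b - a) / 2) ^ (q + 1)) ^ (1 / q) * ((q + 1) ^ (1 / q))⁻¹ := by
          rw [div_eq_mul_inv, Real.mul_rpow (by positivity) (by positivity),
            Real.mul_rpow (by norm_num) (by positivity), Real.inv_rpow hq1p.le]
      _ = (2 : ℝ) ^ (1 / q) * ((b - a) / 2) ^ (1 + 1 / q) * (q + 1) ^ (-(1 / q)) := by
          rw [← Real.rpow_mul hc2.le, hqq, ← Real.rpow_neg hq1p.le]
      _ = (b - a) ^ (1 + 1 / q) * (2 : ℝ) ^ (1 / q - (1 + 1 / q)) * (q + 1) ^ (-(1 / q)) := by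
          rw [Real.div_rpow hba.le h2.le, Real.rpow_sub h2]; ring
      _ = (1 / 2) * (q + 1) ^ (-(1 / q)) * (b - a) ^ (1 + 1 / q) := by
          rw [hexp, Real.rpow_neg_one]; ring
  -- conclude
  have hPnn : (0:ℝ) ≤ ∫ x in a..b, |g' x| ^ p :=
    intervalIntegral.integral_nonneg hab' fun x _ => by positivity
  calc |∫ x in a..b, g' x * (x - m)|
      = |∫ x, g' x * (x - m) ∂μ| := by rw [hIoc]
    _ ≤ ∫ x, ‖g' x‖ * ‖x - m‖ ∂μ := habs
    _ ≤ (∫ x, ‖g' x‖ ^ p ∂μ) ^ (1 / p) * (∫ x, ‖x - m‖ ^ q ∂μ) ^ (1 / q) := holder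
    _ = (∫ x in a..b, |g' x| ^ p) ^ (1 / p)
          * ((1 / 2) * (q + 1) ^ (-(1 / q)) * (b - a) ^ (1 + 1 / q)) := by
        rw [hpint, hJ, hqnorm]
    _ = (1 / 2) * (q + 1) ^ (-(1 / q)) * (∫ x in a..b, |g' x| ^ p) ^ (1 / p)
          * (b - a) ^ (1 + 1 / q) := by ring
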